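/- Suppose there exists an infinite subset S ⊆ ℂ∖{0} such that for every λ ∈ S the matrix-valued 1-form Ã^λ satisfies the Maurer–Cartan equation dÃ^λ + Ã^λ∧Ã^λ = 0 on U. Then the 1-forms θ, ω, β, η satisfy all of the equations (a) dθ + ω∧θ = 0, (b) dω + ω∧ω − ε·θ∧θᵀ − β∧βᵀ = 0, (c) dβ + ω∧β + β∧η = 0, (d) dη + η∧η − βᵀ∧β = 0, (G) dω + ω∧ω = c·θ∧θᵀ and (N) dη + η∧η = 0 on U. -/

import Mathlib

open Matrix

/-- Index type for `(n+1)×(n+1)` matrices partitioned into the blocks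
`{0}` (size 1), `mid = {1,…,m}` (size `m`) and `bot = {m+1,…,n}` (size `k = n−m`). -/
abbrev Idx (m k : ℕ) := Fin 1 ⊕ Fin m ⊕ Fin k

/-- Assemble a matrix from nine blocks (block sizes 1, m, k). -/
def blk3 {R : Type*} {m k : ℕ}
    (A00 : Matrix (Fin 1) (Fin 1) R) (A01 : Matrix (Fin 1) (Fin m) R)
    (A02 : Matrix (Fin 1) (Fin k) R)
    (A10 : Matrix (Fin m) (Fin 1) R) (A11 : Matrix (Fin m) (Fin m) R)
    (A12 : Matrix (Fin m) (Fin k) R)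
    (A20 : Matrix (Fin k) (Fin 1) R) (A21 : Matrix (Fin k) (Fin m) R)
    (A22 : Matrix (Fin k) (Fin k) R) :
    Matrix (Idx m k) (Idx m k) R :=
  Matrix.of fun i j =>
    match i, j with
    | Sum.inl a, Sum.inl b => A00 a b
    | Sum.inl a, Sum.inr (Sum.inl b) => A01 a b
    | Sum.inl a, Sum.inr (Sum.inr b) => A02 a b
    | Sum.inr (Sum.inl a), Sum.inl b => A10 a b
    | Sum.inr (Sum.inl a), Sum.inr (Sum.inl b) => A11 a b
    | Sum.inr (Sum.inl a), Sum.inr (Sum.inr b) => A12 a b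
    | Sum.inr (Sum.inr a), Sum.inl b => A20 a b
    | Sum.inr (Sum.inr a), Sum.inr (Sum.inl b) => A21 a b
    | Sum.inr (Sum.inr a), Sum.inr (Sum.inr b) => A22 a b

/-- The involution `P = diag(−1, I_m, −I_k)`. -/
def Pmat (R : Type*) [Ring R] (m k : ℕ) : Matrix (Idx m k) (Idx m k) R :=
  blk3 (-1) 0 0 0 1 0 0 0 (-1)

/-- The involution `Q = diag(1, I_m, −I_k)`. -/
def Qmat (R : Type*) [Ring R] (m k : ℕ) : Matrix (Idx m k) (Idx m k) R :=
  blk3 1 0 0 0 1 0 0 0 (-1)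

/-- Entrywise exterior derivative of a matrix-valued 1-form on (an open subset of) `ℝ^m`:
`dα(x)(X,Y) = D_X(α(·)(Y))(x) − D_Y(α(·)(X))(x)`. -/
noncomputable def exd {m : ℕ} {p q : Type*} {𝕜 : Type*} [RCLike 𝕜]
    (α : (Fin m → ℝ) → (Fin m → ℝ) → Matrix p q 𝕜) (x X Y : Fin m → ℝ) : Matrix p q 𝕜 :=
  Matrix.of fun i j =>
    fderiv ℝ (fun u => α u Y i j) x X - fderiv ℝ (fun u => α u X i j) x Y

/-- The loop of 1-forms `Ã^λ` in block form (block sizes 1, m, k = n − m):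
first row `(0, −ε(s/2)(λ+λ⁻¹)θᵀ, 0)`; second row
`((s/2)(λ+λ⁻¹)θ, ω, (s/(2t))(λ−λ⁻¹)β)`; third row `(0, −(s/(2t))(λ−λ⁻¹)βᵀ, η)`. -/
noncomputable def Atilde {m k : ℕ}
    (θ : (Fin m → ℝ) → (Fin m → ℝ) → Matrix (Fin m) (Fin 1) ℝ)
    (ω : (Fin m → ℝ) → (Fin m → ℝ) → Matrix (Fin m) (Fin m) ℝ)
    (β : (Fin m → ℝ) → (Fin m → ℝ) → Matrix (Fin m) (Fin k) ℝ)
    (η : (Fin m → ℝ) → (Fin m → ℝ) → Matrix (Fin k) (Fin k) ℝ)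
    (ε : ℝ) (s t lam : ℂ) (x X : Fin m → ℝ) : Matrix (Idx m k) (Idx m k) ℂ :=
  blk3 0 ((-(ε : ℂ) * (s / 2) * (lam + lam⁻¹)) • ((θ x X).map Complex.ofReal)ᵀ) 0
    ((s / 2 * (lam + lam⁻¹)) • (θ x X).map Complex.ofReal)
    ((ω x X).map Complex.ofReal)
    ((s / (2 * t) * (lam - lam⁻¹)) • (β x X).map Complex.ofReal)
    0 ((-(s / (2 * t)) * (lam - lam⁻¹)) • ((β x X).map Complex.ofReal)ᵀ)
    ((η x X).map Complex.ofReal)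

section Helpers

lemma fderiv_cast' {m : ℕ} (g : (Fin m → ℝ) → ℝ) (x X : Fin m → ℝ)
    (hg : DifferentiableAt ℝ g x) :
    fderiv ℝ (fun u => ((g u : ℝ) : ℂ)) x X = ((fderiv ℝ g x X : ℝ) : ℂ) := by
  have h2 : fderiv ℝ (fun u => ((g u : ℝ) : ℂ)) x = Complex.ofRealCLM.comp (fderiv ℝ g x) :=
    (Complex.ofRealCLM.hasFDerivAt.comp x hg.hasFDerivAt).fderiv
  simp [h2]

lemma fderiv_cast_mul' {m : ℕ} (coef : ℂ) (g : (Fin m → ℝ) → ℝ) (x X : Fin m → ℝ)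
    (hg : DifferentiableAt ℝ g x) :
    fderiv ℝ (fun u => coef * ((g u : ℝ) : ℂ)) x X = coef * ((fderiv ℝ g x X : ℝ) : ℂ) := by
  have h1 : DifferentiableAt ℝ (fun u => ((g u : ℝ) : ℂ)) x :=
    Complex.ofRealCLM.differentiableAt.comp x hg
  rw [fderiv_const_mul h1 coef, ContinuousLinearMap.smul_apply, fderiv_cast' g x X hg,
    smul_eq_mul]

lemma csum0' {ι : Type*} [Fintype ι] (a b : ι → ℝ) :
    ∑ l, ((a l : ℂ) * (b l : ℂ)) = ((∑ l, a l * b l : ℝ) : ℂ) := by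
  push_cast; rfl

lemma csum1a {ι : Type*} [Fintype ι] (c : ℂ) (a b : ι → ℝ) :
    ∑ l, (a l : ℂ) * (c * (b l : ℂ)) = c * ((∑ l, a l * b l : ℝ) : ℂ) := by
  push_cast [Finset.mul_sum]; exact Finset.sum_congr rfl fun _ _ => by ring

lemma csum1b {ι : Type*} [Fintype ι] (c : ℂ) (a b : ι → ℝ) :
    ∑ l, (c * (a l : ℂ)) * (b l : ℂ) = c * ((∑ l, a l * b l : ℝ) : ℂ) := by
  push_cast [Finset.mul_sum]; exact Finset.sum_congr rfl fun _ _ => by ring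

lemma csum2' {ι : Type*} [Fintype ι] (c d : ℂ) (a b : ι → ℝ) :
    ∑ l, (c * (a l : ℂ)) * (d * (b l : ℂ)) = (c * d) * ((∑ l, a l * b l : ℝ) : ℂ) := by
  push_cast [Finset.mul_sum]; exact Finset.sum_congr rfl fun _ _ => by ring

lemma solveDTB (ε c s t l₁ l₂ D T B : ℂ) (hε2 : ε^2 = 1) (hs : s^2 = ε*c)
    (ht : t^2 = 1 - ε*c) (hc0 : c ≠ 0) (hεc : (1:ℂ) - ε*c ≠ 0)
    (hl₁ : l₁ ≠ 0)
    (hv : (l₁^2 - l₂^2)*(l₁^2*l₂^2 - 1) ≠ 0)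
    (h₁ : 4*t^2*l₁^2*D = ε*s^2*t^2*(l₁^2+1)^2*T + s^2*(l₁^2-1)^2*B)
    (h₂ : 4*t^2*l₂^2*D = ε*s^2*t^2*(l₂^2+1)^2*T + s^2*(l₂^2-1)^2*B) :
    B = (c - ε)*T ∧ D = c*T := by
  have hε0 : ε ≠ 0 := by intro h; rw [h] at hε2; simp at hε2
  rw [hs, ht] at h₁ h₂
  have h3 : (ε*c) * ((l₁^2 - l₂^2)*(l₁^2*l₂^2 - 1)) * (ε*(1-ε*c)*T + B) = 0 := by
    linear_combination l₁^2 * h₂ - l₂^2 * h₁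
  have h5 : ε*(1-ε*c)*T + B = 0 := by
    have := mul_ne_zero (mul_ne_zero hε0 hc0) hv
    exact (mul_eq_zero.mp h3).resolve_left this
  have hB : B = (c - ε)*T := by linear_combination h5 + c*T*hε2
  refine ⟨hB, ?_⟩
  have h4 : 4*(1-ε*c)*l₁^2*(D - c*T) = 0 := by
    linear_combination h₁ + (ε*c)*(l₁^2-1)^2*hB + c*T*((1-ε*c)*(l₁^2+1)^2 - (l₁^2-1)^2)*hε2
  have hnz : (4:ℂ)*(1-ε*c)*l₁^2 ≠ 0 :=
    mul_ne_zero (mul_ne_zero (by norm_num) hεc) (pow_ne_zero 2 hl₁)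
  have h6 := (mul_eq_zero.mp h4).resolve_left hnz
  linear_combination h6

lemma solveN (s t l₁ l₂ D B : ℂ) (hs0 : s ≠ 0) (ht0 : t ≠ 0) (hl₁ : l₁ ≠ 0)
    (hv : (l₁^2 - l₂^2)*(l₁^2*l₂^2 - 1) ≠ 0)
    (h₁ : 4*t^2*l₁^2*D = s^2*(l₁^2-1)^2*B)
    (h₂ : 4*t^2*l₂^2*D = s^2*(l₂^2-1)^2*B) :
    B = 0 ∧ D = 0 := by
  have h3 : s^2 * ((l₁^2 - l₂^2)*(l₁^2*l₂^2 - 1)) * B = 0 := by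
    linear_combination l₁^2 * h₂ - l₂^2 * h₁
  have hB : B = 0 := by
    have := mul_ne_zero (pow_ne_zero 2 hs0) hv
    exact (mul_eq_zero.mp h3).resolve_left this
  refine ⟨hB, ?_⟩
  have h4 : 4*t^2*l₁^2*D = 0 := by rw [h₁, hB, mul_zero]
  have hnz : (4:ℂ)*t^2*l₁^2 ≠ 0 :=
    mul_ne_zero (mul_ne_zero (by norm_num) (pow_ne_zero 2 ht0)) (pow_ne_zero 2 hl₁)
  exact (mul_eq_zero.mp h4).resolve_left hnz

open Polynomial in
lemma pick_lams (S : Set ℂ) (hS : S.Infinite) :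
    ∃ l₁ ∈ S, ∃ l₂ ∈ S, l₁ ≠ 0 ∧ l₂ ≠ 0 ∧ (l₁^2+1) ≠ 0 ∧ (l₁^2-1) ≠ 0 ∧
      (l₁^2 - l₂^2)*(l₁^2*l₂^2 - 1) ≠ 0 := by
  have hp1 : (X^5 - X : ℂ[X]) ≠ 0 := by
    intro h
    have := congrArg (fun p => coeff p 5) h
    simp [coeff_X] at this
  obtain ⟨l₁, hl₁S, hl₁⟩ := (hS.diff (finite_setOf_isRoot hp1)).nonempty
  have h1 : l₁^5 - l₁ ≠ 0 := by simpa [IsRoot] using hl₁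
  have hfac : l₁ * (l₁^2+1) * (l₁^2-1) ≠ 0 := fun h => h1 (by linear_combination h)
  have hl₁0 : l₁ ≠ 0 := fun h => hfac (by rw [h]; ring)
  have hp2 : (X * ((C (l₁^2) - X^2) * (C (l₁^2) * X^2 - 1)) : ℂ[X]) ≠ 0 := by
    refine mul_ne_zero X_ne_zero (mul_ne_zero ?_ ?_)
    · intro h
      have := congrArg (fun p => coeff p 2) h
      simp only [coeff_sub, coeff_C, coeff_X_pow, coeff_zero] at this
      norm_num at this
    · intro h
      have := congrArg (fun p => coeff p 0) h
      simp only [coeff_sub, coeff_one, coeff_C_mul, coeff_X_pow, coeff_zero] at this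
      norm_num at this
  obtain ⟨l₂, hl₂S, hl₂⟩ := (hS.diff (finite_setOf_isRoot hp2)).nonempty
  have h2' : l₂ * ((l₁^2 - l₂^2) * (l₁^2*l₂^2 - 1)) ≠ 0 := by
    simpa [IsRoot] using hl₂
  refine ⟨l₁, hl₁S, l₂, hl₂S, hl₁0, fun h => h2' (by rw [h]; ring),
    fun h => hfac (by rw [h]; ring), fun h => hfac (by rw [h]; ring),
    fun h => h2' (by rw [h]; ring)⟩

end Helpers

/-- Converse: if the Maurer–Cartan equation `dÃ^λ + Ã^λ∧Ã^λ = 0` holds on `U` for every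
`λ` in some infinite subset `S ⊆ ℂ∖{0}`, then `θ, ω, β, η` satisfy the structural
equations (a)–(d) together with (G) `dω + ω∧ω = c·θ∧θᵀ` and (N) `dη + η∧η = 0` on `U`. -/
theorem stmt_1 {m k : ℕ} (hm : 1 ≤ m) (hk : 1 ≤ k)
    (U : Set (Fin m → ℝ)) (hU : IsOpen U)
    (ε c : ℝ) (hε : ε = 1 ∨ ε = -1) (hc : c ≠ 0) (hεc : ε * c ≠ 1)
    (s t : ℂ) (hs : s ^ 2 = (ε : ℂ) * (c : ℂ)) (ht : t ^ 2 = 1 - (ε : ℂ) * (c : ℂ))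
    (θ : (Fin m → ℝ) → (Fin m → ℝ) → Matrix (Fin m) (Fin 1) ℝ)
    (ω : (Fin m → ℝ) → (Fin m → ℝ) → Matrix (Fin m) (Fin m) ℝ)
    (β : (Fin m → ℝ) → (Fin m → ℝ) → Matrix (Fin m) (Fin k) ℝ)
    (η : (Fin m → ℝ) → (Fin m → ℝ) → Matrix (Fin k) (Fin k) ℝ)
    (hθlin : ∀ x, IsLinearMap ℝ (θ x)) (hωlin : ∀ x, IsLinearMap ℝ (ω x))
    (hβlin : ∀ x, IsLinearMap ℝ (β x)) (hηlin : ∀ x, IsLinearMap ℝ (η x))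
    (hθC : ∀ X i j, ContDiffOn ℝ 1 (fun u => θ u X i j) U)
    (hωC : ∀ X i j, ContDiffOn ℝ 1 (fun u => ω u X i j) U)
    (hβC : ∀ X i j, ContDiffOn ℝ 1 (fun u => β u X i j) U)
    (hηC : ∀ X i j, ContDiffOn ℝ 1 (fun u => η u X i j) U)
    (hωso : ∀ x X, (ω x X)ᵀ = -ω x X) (hηso : ∀ x X, (η x X)ᵀ = -η x X)
    (S : Set ℂ) (hSinf : S.Infinite) (hS0 : ∀ lam ∈ S, lam ≠ 0)
    (hMC : ∀ lam ∈ S, ∀ x ∈ U, ∀ X Y : Fin m → ℝ,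
      exd (fun u Z => Atilde θ ω β η ε s t lam u Z) x X Y
        + (Atilde θ ω β η ε s t lam x X * Atilde θ ω β η ε s t lam x Y
            - Atilde θ ω β η ε s t lam x Y * Atilde θ ω β η ε s t lam x X) = 0) :
    (∀ x ∈ U, ∀ X Y : Fin m → ℝ,
      exd θ x X Y + (ω x X * θ x Y - ω x Y * θ x X) = 0) ∧
    (∀ x ∈ U, ∀ X Y : Fin m → ℝ,
      exd ω x X Y + (ω x X * ω x Y - ω x Y * ω x X)
        - ε • (θ x X * (θ x Y)ᵀ - θ x Y * (θ x X)ᵀ)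
        - (β x X * (β x Y)ᵀ - β x Y * (β x X)ᵀ) = 0) ∧
    (∀ x ∈ U, ∀ X Y : Fin m → ℝ,
      exd β x X Y + (ω x X * β x Y - ω x Y * β x X)
        + (β x X * η x Y - β x Y * η x X) = 0) ∧
    (∀ x ∈ U, ∀ X Y : Fin m → ℝ,
      exd η x X Y + (η x X * η x Y - η x Y * η x X)
        - ((β x X)ᵀ * β x Y - (β x Y)ᵀ * β x X) = 0) ∧
    (∀ x ∈ U, ∀ X Y : Fin m → ℝ,
      exd ω x X Y + (ω x X * ω x Y - ω x Y * ω x X)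
        = c • (θ x X * (θ x Y)ᵀ - θ x Y * (θ x X)ᵀ)) ∧
    (∀ x ∈ U, ∀ X Y : Fin m → ℝ,
      exd η x X Y + (η x X * η x Y - η x Y * η x X) = 0) := by
  obtain ⟨l₁, hl₁S, l₂, hl₂S, hl₁0, hl₂0, h1p, h1m, hv⟩ := pick_lams S hSinf
  have hc0C : (c:ℂ) ≠ 0 := Complex.ofReal_ne_zero.mpr hc
  have hε2C : ((ε:ℝ):ℂ)^2 = 1 := by rcases hε with h|h <;> rw [h] <;> norm_num
  have hεcC : (1:ℂ) - (ε:ℂ)*(c:ℂ) ≠ 0 := by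
    intro h
    apply hεc
    have h2 : ((ε*c:ℝ):ℂ) = ((1:ℝ):ℂ) := by push_cast; linear_combination -h
    exact_mod_cast h2
  have hs0 : s ≠ 0 := by
    intro h
    rw [h] at hs
    have h2 : ((ε*c:ℝ):ℂ) = ((0:ℝ):ℂ) := by push_cast; linear_combination -hs
    have h3 : ε*c = 0 := by exact_mod_cast h2
    rcases hε with h'|h' <;> rw [h'] at h3 <;> apply hc <;> linarith
  have ht0 : t ≠ 0 := by
    intro h
    rw [h] at ht
    apply hεc
    have h2 : ((ε*c:ℝ):ℂ) = ((1:ℝ):ℂ) := by push_cast; linear_combination ht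
    exact_mod_cast h2
  have core : ∀ x ∈ U, ∀ X Y : Fin m → ℝ,
      (exd θ x X Y + (ω x X * θ x Y - ω x Y * θ x X) = 0) ∧
      (exd ω x X Y + (ω x X * ω x Y - ω x Y * ω x X)
        - ε • (θ x X * (θ x Y)ᵀ - θ x Y * (θ x X)ᵀ)
        - (β x X * (β x Y)ᵀ - β x Y * (β x X)ᵀ) = 0) ∧
      (exd β x X Y + (ω x X * β x Y - ω x Y * β x X)
        + (β x X * η x Y - β x Y * η x X) = 0) ∧
      (exd η x X Y + (η x X * η x Y - η x Y * η x X)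
        - ((β x X)ᵀ * β x Y - (β x Y)ᵀ * β x X) = 0) ∧
      (exd ω x X Y + (ω x X * ω x Y - ω x Y * ω x X)
        = c • (θ x X * (θ x Y)ᵀ - θ x Y * (θ x X)ᵀ)) ∧
      (exd η x X Y + (η x X * η x Y - η x Y * η x X) = 0) := by
    intro x hx X Y
    have dθ : ∀ (Z : Fin m → ℝ) i j, DifferentiableAt ℝ (fun u => θ u Z i j) x :=
      fun Z i j => ((hθC Z i j).differentiableOn one_ne_zero).differentiableAt (hU.mem_nhds hx)
    have dω : ∀ (Z : Fin m → ℝ) i j, DifferentiableAt ℝ (fun u => ω u Z i j) x :=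
      fun Z i j => ((hωC Z i j).differentiableOn one_ne_zero).differentiableAt (hU.mem_nhds hx)
    have dβ : ∀ (Z : Fin m → ℝ) i j, DifferentiableAt ℝ (fun u => β u Z i j) x :=
      fun Z i j => ((hβC Z i j).differentiableOn one_ne_zero).differentiableAt (hU.mem_nhds hx)
    have dη : ∀ (Z : Fin m → ℝ) i j, DifferentiableAt ℝ (fun u => η u Z i j) x :=
      fun Z i j => ((hηC Z i j).differentiableOn one_ne_zero).differentiableAt (hU.mem_nhds hx)
    have key1 : ∀ lam ∈ S, lam ≠ 0 → ∀ (i : Fin m) (j : Fin 1),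
        s * (lam^2 + 1) *
        (((fderiv ℝ (fun u => θ u Y i j) x X : ℝ) : ℂ) -
          ((fderiv ℝ (fun u => θ u X i j) x Y : ℝ) : ℂ) +
          (((∑ l, ω x X i l * θ x Y l j : ℝ) : ℂ) -
           ((∑ l, ω x Y i l * θ x X l j : ℝ) : ℂ))) = 0 := by
      intro lam hlam hl0 i j
      have E1 : 2*lam*(s/2*(lam+lam⁻¹)) = s*(lam^2+1) := by
        linear_combination s*(mul_inv_cancel₀ hl0)
      have h10 := congrFun (congrFun (hMC lam hlam x hx X Y) (Sum.inr (Sum.inl i))) (Sum.inl j)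
      simp only [exd, Atilde, Matrix.add_apply, Matrix.sub_apply, Matrix.mul_apply,
        Matrix.of_apply, blk3, Matrix.smul_apply, Matrix.map_apply, Matrix.transpose_apply,
        Fintype.sum_sum_type, Matrix.zero_apply, smul_eq_mul, mul_zero, zero_mul,
        Finset.sum_const_zero, add_zero, zero_add] at h10
      rw [fderiv_cast_mul' _ _ _ _ (dθ Y i j), fderiv_cast_mul' _ _ _ _ (dθ X i j)] at h10
      simp only [csum2', csum1a, csum1b, csum0'] at h10
      linear_combination 2*lam*h10 -
        (((fderiv ℝ (fun u => θ u Y i j) x X : ℝ) : ℂ) -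
          ((fderiv ℝ (fun u => θ u X i j) x Y : ℝ) : ℂ) +
          (((∑ l, ω x X i l * θ x Y l j : ℝ) : ℂ) -
           ((∑ l, ω x Y i l * θ x X l j : ℝ) : ℂ)))*E1
    have key2 : ∀ lam ∈ S, lam ≠ 0 → ∀ (i j : Fin m),
        4*t^2*lam^2 *
        (((fderiv ℝ (fun u => ω u Y i j) x X : ℝ) : ℂ) -
          ((fderiv ℝ (fun u => ω u X i j) x Y : ℝ) : ℂ) +
          (((∑ l, ω x X i l * ω x Y l j : ℝ) : ℂ) -
           ((∑ l, ω x Y i l * ω x X l j : ℝ) : ℂ))) =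
        (ε:ℂ)*s^2*t^2*(lam^2+1)^2 *
        (((∑ l, θ x X i l * θ x Y j l : ℝ) : ℂ) -
          ((∑ l, θ x Y i l * θ x X j l : ℝ) : ℂ)) +
        s^2*(lam^2-1)^2 *
        (((∑ l, β x X i l * β x Y j l : ℝ) : ℂ) -
          ((∑ l, β x Y i l * β x X j l : ℝ) : ℂ)) := by
      intro lam hlam hl0 i j
      have E1 : 2*lam*(s/2*(lam+lam⁻¹)) = s*(lam^2+1) := by
        linear_combination s*(mul_inv_cancel₀ hl0)
      have E2 : 2*t*lam*(s/(2*t)*(lam-lam⁻¹)) = s*(lam^2-1) := by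
        linear_combination (s*lam^2 - s*(lam*lam⁻¹))*(mul_inv_cancel₀ ht0) -
          s*(mul_inv_cancel₀ hl0)
      have h11 := congrFun (congrFun (hMC lam hlam x hx X Y) (Sum.inr (Sum.inl i)))
        (Sum.inr (Sum.inl j))
      simp only [exd, Atilde, Matrix.add_apply, Matrix.sub_apply, Matrix.mul_apply,
        Matrix.of_apply, blk3, Matrix.smul_apply, Matrix.map_apply, Matrix.transpose_apply,
        Fintype.sum_sum_type, Matrix.zero_apply, smul_eq_mul, mul_zero, zero_mul,
        Finset.sum_const_zero, add_zero, zero_add] at h11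
      rw [fderiv_cast' _ _ _ (dω Y i j), fderiv_cast' _ _ _ (dω X i j)] at h11
      simp only [csum2', csum1a, csum1b, csum0'] at h11
      linear_combination 4*t^2*lam^2*h11 +
        (ε:ℂ)*t^2*(2*lam*(s/2*(lam+lam⁻¹)) + s*(lam^2+1))*
        (((∑ l, θ x X i l * θ x Y j l : ℝ) : ℂ) -
          ((∑ l, θ x Y i l * θ x X j l : ℝ) : ℂ))*E1 +
        (2*t*lam*(s/(2*t)*(lam-lam⁻¹)) + s*(lam^2-1))*
        (((∑ l, β x X i l * β x Y j l : ℝ) : ℂ) -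
          ((∑ l, β x Y i l * β x X j l : ℝ) : ℂ))*E2
    have key3 : ∀ lam ∈ S, lam ≠ 0 → ∀ (i : Fin m) (j : Fin k),
        s * (lam^2 - 1) *
        (((fderiv ℝ (fun u => β u Y i j) x X : ℝ) : ℂ) -
          ((fderiv ℝ (fun u => β u X i j) x Y : ℝ) : ℂ) +
          (((∑ l, ω x X i l * β x Y l j : ℝ) : ℂ) -
           ((∑ l, ω x Y i l * β x X l j : ℝ) : ℂ)) +
          (((∑ l, β x X i l * η x Y l j : ℝ) : ℂ) -
           ((∑ l, β x Y i l * η x X l j : ℝ) : ℂ))) = 0 := by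
      intro lam hlam hl0 i j
      have E2 : 2*t*lam*(s/(2*t)*(lam-lam⁻¹)) = s*(lam^2-1) := by
        linear_combination (s*lam^2 - s*(lam*lam⁻¹))*(mul_inv_cancel₀ ht0) -
          s*(mul_inv_cancel₀ hl0)
      have h12 := congrFun (congrFun (hMC lam hlam x hx X Y) (Sum.inr (Sum.inl i)))
        (Sum.inr (Sum.inr j))
      simp only [exd, Atilde, Matrix.add_apply, Matrix.sub_apply, Matrix.mul_apply,
        Matrix.of_apply, blk3, Matrix.smul_apply, Matrix.map_apply, Matrix.transpose_apply,
        Fintype.sum_sum_type, Matrix.zero_apply, smul_eq_mul, mul_zero, zero_mul,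
        Finset.sum_const_zero, add_zero, zero_add] at h12
      rw [fderiv_cast_mul' _ _ _ _ (dβ Y i j), fderiv_cast_mul' _ _ _ _ (dβ X i j)] at h12
      simp only [csum2', csum1a, csum1b, csum0'] at h12
      linear_combination 2*t*lam*h12 -
        (((fderiv ℝ (fun u => β u Y i j) x X : ℝ) : ℂ) -
          ((fderiv ℝ (fun u => β u X i j) x Y : ℝ) : ℂ) +
          (((∑ l, ω x X i l * β x Y l j : ℝ) : ℂ) -
           ((∑ l, ω x Y i l * β x X l j : ℝ) : ℂ)) +
          (((∑ l, β x X i l * η x Y l j : ℝ) : ℂ) -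
           ((∑ l, β x Y i l * η x X l j : ℝ) : ℂ)))*E2
    have key4 : ∀ lam ∈ S, lam ≠ 0 → ∀ (i j : Fin k),
        4*t^2*lam^2 *
        (((fderiv ℝ (fun u => η u Y i j) x X : ℝ) : ℂ) -
          ((fderiv ℝ (fun u => η u X i j) x Y : ℝ) : ℂ) +
          (((∑ l, η x X i l * η x Y l j : ℝ) : ℂ) -
           ((∑ l, η x Y i l * η x X l j : ℝ) : ℂ))) =
        s^2*(lam^2-1)^2 *
        (((∑ l, β x X l i * β x Y l j : ℝ) : ℂ) -
          ((∑ l, β x Y l i * β x X l j : ℝ) : ℂ)) := by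
      intro lam hlam hl0 i j
      have E2 : 2*t*lam*(s/(2*t)*(lam-lam⁻¹)) = s*(lam^2-1) := by
        linear_combination (s*lam^2 - s*(lam*lam⁻¹))*(mul_inv_cancel₀ ht0) -
          s*(mul_inv_cancel₀ hl0)
      have h13 := congrFun (congrFun (hMC lam hlam x hx X Y) (Sum.inr (Sum.inr i)))
        (Sum.inr (Sum.inr j))
      simp only [exd, Atilde, Matrix.add_apply, Matrix.sub_apply, Matrix.mul_apply,
        Matrix.of_apply, blk3, Matrix.smul_apply, Matrix.map_apply, Matrix.transpose_apply,
        Fintype.sum_sum_type, Matrix.zero_apply, smul_eq_mul, mul_zero, zero_mul,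
        Finset.sum_const_zero, add_zero, zero_add] at h13
      rw [fderiv_cast' _ _ _ (dη Y i j), fderiv_cast' _ _ _ (dη X i j)] at h13
      simp only [csum2', csum1a, csum1b, csum0'] at h13
      linear_combination 4*t^2*lam^2*h13 +
        (((∑ l, β x X l i * β x Y l j : ℝ) : ℂ) -
          ((∑ l, β x Y l i * β x X l j : ℝ) : ℂ))*(2*t*lam*(s/(2*t)*(lam-lam⁻¹)) + s*(lam^2-1))*E2
    have hθfact : ∀ (i : Fin m) (j : Fin 1),
        fderiv ℝ (fun u => θ u Y i j) x X - fderiv ℝ (fun u => θ u X i j) x Y +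
          (∑ l, ω x X i l * θ x Y l j - ∑ l, ω x Y i l * θ x X l j) = 0 := by
      intro i j
      have h := key1 l₁ hl₁S hl₁0 i j
      have h2 := (mul_eq_zero.mp h).resolve_left (mul_ne_zero hs0 h1p)
      exact_mod_cast h2
    have hβfact : ∀ (i : Fin m) (j : Fin k),
        fderiv ℝ (fun u => β u Y i j) x X - fderiv ℝ (fun u => β u X i j) x Y +
          (∑ l, ω x X i l * β x Y l j - ∑ l, ω x Y i l * β x X l j) +
          (∑ l, β x X i l * η x Y l j - ∑ l, β x Y i l * η x X l j) = 0 := by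
      intro i j
      have h := key3 l₁ hl₁S hl₁0 i j
      have h2 := (mul_eq_zero.mp h).resolve_left (mul_ne_zero hs0 h1m)
      exact_mod_cast h2
    have hDT : ∀ (i j : Fin m),
        ((∑ l, β x X i l * β x Y j l) - (∑ l, β x Y i l * β x X j l) =
          (c - ε) * ((∑ l, θ x X i l * θ x Y j l) - (∑ l, θ x Y i l * θ x X j l))) ∧
        (fderiv ℝ (fun u => ω u Y i j) x X - fderiv ℝ (fun u => ω u X i j) x Y +
          ((∑ l, ω x X i l * ω x Y l j) - (∑ l, ω x Y i l * ω x X l j)) =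
          c * ((∑ l, θ x X i l * θ x Y j l) - (∑ l, θ x Y i l * θ x X j l))) := by
      intro i j
      have h₁ := key2 l₁ hl₁S hl₁0 i j
      have h₂ := key2 l₂ hl₂S hl₂0 i j
      obtain ⟨hB, hD⟩ := solveDTB ((ε:ℝ):ℂ) ((c:ℝ):ℂ) s t l₁ l₂ _ _ _
        hε2C hs ht hc0C hεcC hl₁0 hv h₁ h₂
      constructor
      · exact_mod_cast hB
      · exact_mod_cast hD
    have hN : ∀ (i j : Fin k),
        ((∑ l, β x X l i * β x Y l j) - (∑ l, β x Y l i * β x X l j) = 0) ∧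
        (fderiv ℝ (fun u => η u Y i j) x X - fderiv ℝ (fun u => η u X i j) x Y +
          ((∑ l, η x X i l * η x Y l j) - (∑ l, η x Y i l * η x X l j)) = 0) := by
      intro i j
      have h₁ := key4 l₁ hl₁S hl₁0 i j
      have h₂ := key4 l₂ hl₂S hl₂0 i j
      obtain ⟨hB, hD⟩ := solveN s t l₁ l₂ _ _ hs0 ht0 hl₁0 hv h₁ h₂
      constructor
      · exact_mod_cast hB
      · exact_mod_cast hD
    refine ⟨?_, ?_, ?_, ?_, ?_, ?_⟩
    · ext i j
      simp only [exd, Matrix.add_apply, Matrix.sub_apply, Matrix.mul_apply, Matrix.smul_apply,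
      smul_eq_mul, Matrix.transpose_apply, Matrix.of_apply, Matrix.zero_apply]
      linear_combination hθfact i j
    · ext i j
      simp only [exd, Matrix.add_apply, Matrix.sub_apply, Matrix.mul_apply, Matrix.smul_apply,
      smul_eq_mul, Matrix.transpose_apply, Matrix.of_apply, Matrix.zero_apply]
      linear_combination (hDT i j).2 - (hDT i j).1
    · ext i j
      simp only [exd, Matrix.add_apply, Matrix.sub_apply, Matrix.mul_apply, Matrix.smul_apply,
      smul_eq_mul, Matrix.transpose_apply, Matrix.of_apply, Matrix.zero_apply]
      linear_combination hβfact i j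
    · ext i j
      simp only [exd, Matrix.add_apply, Matrix.sub_apply, Matrix.mul_apply, Matrix.smul_apply,
      smul_eq_mul, Matrix.transpose_apply, Matrix.of_apply, Matrix.zero_apply]
      linear_combination (hN i j).2 - (hN i j).1
    · ext i j
      simp only [exd, Matrix.add_apply, Matrix.sub_apply, Matrix.mul_apply, Matrix.smul_apply,
      smul_eq_mul, Matrix.transpose_apply, Matrix.of_apply, Matrix.zero_apply]
      linear_combination (hDT i j).2
    · ext i j
      simp only [exd, Matrix.add_apply, Matrix.sub_apply, Matrix.mul_apply, Matrix.smul_apply,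
      smul_eq_mul, Matrix.transpose_apply, Matrix.of_apply, Matrix.zero_apply]
      linear_combination (hN i j).2
  exact ⟨fun x hx X Y => (core x hx X Y).1,
    fun x hx X Y => (core x hx X Y).2.1,
    fun x hx X Y => (core x hx X Y).2.2.1,
    fun x hx X Y => (core x hx X Y).2.2.2.1,
    fun x hx X Y => (core x hx X Y).2.2.2.2.1,
    fun x hx X Y => (core x hx X Y).2.2.2.2.2⟩
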